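/- Let q ∈ [1,∞) and let (w_n) be a sequence in L^q(I,E) such that the family {|w_n(·)|^q : n ∈ ℕ} is uniformly integrable and, for a.e. t ∈ I, the set {w_n(t) : n ∈ ℕ} is relatively compact in E. Then for every ε > 0 there exist a norm-compact set C ⊆ E and functions v_n ∈ L^q(I,E) with v_n(t) ∈ C for a.e. t ∈ I and ‖w_n − v_n‖_q < ε for every n ∈ ℕ. -/

import Mathlib

open MeasureTheory Filter Topology Set
open scoped ENNReal NNReal

noncomputable section

/-- The Lebesgue measure restricted to the interval `I = [0, T]`. -/
abbrev μI (T : ℝ) : MeasureTheory.Measure ℝ := MeasureTheory.volume.restrict (Set.Icc 0 T)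

/-- if `(wₙ) ⊆ L^q(I,E)` is a uniformly `q`-integrable sequence whose slices
`{wₙ(t) : n ∈ ℕ}` are a.e. relatively compact, then for every `ε > 0` there exist a norm-compact
set `C ⊆ E` and functions `vₙ ∈ L^q(I,E)` with values a.e. in `C` such that `‖wₙ − vₙ‖_q < ε`
for every `n`. -/
theorem statement4 {E : Type*} [NormedAddCommGroup E] [NormedSpace ℝ E] [CompleteSpace E]
    (T : ℝ) (hT : 0 < T) (q : ℝ≥0∞) [Fact (1 ≤ q)] (hq : q ≠ ∞)
    (w : ℕ → Lp E q (μI T))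
    (hui : UniformIntegrable (fun n => ((w n : Lp E q (μI T)) : ℝ → E)) q (μI T))
    (hslice : ∀ᵐ t ∂(μI T), IsCompact (closure (Set.range fun n => w n t))) :
    ∀ ε > (0:ℝ), ∃ C : Set E, IsCompact C ∧ ∃ v : ℕ → Lp E q (μI T),
      ∀ n, (∀ᵐ t ∂(μI T), v n t ∈ C) ∧ ‖w n - v n‖ < ε := by
  intro ε hε
  have hμ : IsFiniteMeasure (μI T) := by
    constructor
    rw [Measure.restrict_apply_univ, Real.volume_Icc]
    exact ENNReal.ofReal_lt_top
  -- strongly measurable representatives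
  set g : ℕ → ℝ → E := fun n => (Lp.aestronglyMeasurable (w n)).mk _ with hgdef
  have hgsm : ∀ n, StronglyMeasurable (g n) :=
    fun n => (Lp.aestronglyMeasurable (w n)).stronglyMeasurable_mk
  have hgw : ∀ n, ((w n : Lp E q (μI T)) : ℝ → E) =ᵐ[μI T] g n :=
    fun n => (Lp.aestronglyMeasurable (w n)).ae_eq_mk
  -- a countable set whose closure contains all values
  obtain ⟨c, hc_count, hc_sub⟩ : ∃ c : Set E, c.Countable ∧ (⋃ n, range (g n)) ⊆ closure c :=
    TopologicalSpace.IsSeparable.iUnion fun n => (hgsm n).isSeparable_range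
  obtain ⟨D, hD⟩ : ∃ D : ℕ → E, insert (0:E) c = range D :=
    ((hc_count.insert 0).exists_eq_range (insert_nonempty _ _))
  have hc_range : c ⊆ range D := by rw [← hD]; exact subset_insert _ _
  -- finite approximating sets
  set F : ℕ → Set E := fun m => D '' Iic m with hFdef
  have hFne : ∀ m, (F m).Nonempty := fun m => ⟨D 0, mem_image_of_mem D (Nat.zero_le m)⟩
  have hFfin : ∀ m, (F m).Finite := fun m => (Set.finite_Iic m).image D
  have hFmono : Monotone F := fun m m' hmm' => Set.image_mono (Iic_subset_Iic.2 hmm')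
  -- the sup-distance functions
  set h : ℕ → ℝ → ℝ≥0∞ := fun m t => ⨆ n, ENNReal.ofReal (Metric.infDist (g n t) (F m))
    with hhdef
  have hhmeas : ∀ m, Measurable (h m) := by
    intro m
    exact Measurable.iSup fun n =>
      ENNReal.measurable_ofReal.comp
        ((Metric.continuous_infDist_pt (F m)).comp_stronglyMeasurable (hgsm n)).measurable
  have hhanti : ∀ t, Antitone fun m => h m t := by
    intro t m m' hmm'
    exact iSup_mono fun n => ENNReal.ofReal_le_ofReal
      (Metric.infDist_le_infDist_of_subset (hFmono hmm') (hFne m))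
  -- the bad sets
  set S : ℕ → ℕ → Set ℝ := fun j m => {t | ENNReal.ofReal ((2:ℝ)⁻¹ ^ j) < h m t} with hSdef
  have hSmeas : ∀ j m, MeasurableSet (S j m) :=
    fun j m => measurableSet_lt measurable_const (hhmeas m)
  have hSanti : ∀ j, Antitone (S j) := by
    intro j m m' hmm' t ht
    exact lt_of_lt_of_le ht (hhanti t hmm')
  -- key a.e. claim
  have hkey : ∀ᵐ t ∂(μI T), ∀ j : ℕ, ∃ m, h m t ≤ ENNReal.ofReal ((2:ℝ)⁻¹ ^ j) := by
    filter_upwards [hslice, ae_all_iff.2 hgw] with t hKc hgt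
    intro j
    set r : ℝ := (2:ℝ)⁻¹ ^ j with hrdef
    have hr : 0 < r := by positivity
    have hcover : closure (range fun n => w n t) ⊆ ⋃ k, Metric.ball (D k) r := by
      intro x hx
      have hx' : x ∈ closure (range D) := by
        have hsub : closure (range fun n => w n t) ⊆ closure (range D) := by
          apply closure_minimal _ isClosed_closure
          rintro _ ⟨n, rfl⟩
          have hgmem : g n t ∈ closure (range D) :=
            closure_mono hc_range (hc_sub (mem_iUnion.2 ⟨n, mem_range_self t⟩))
          simpa only [hgt n] using hgmem
        exact hsub hx
      obtain ⟨y, ⟨k, rfl⟩, hy⟩ := Metric.mem_closure_iff.1 hx' r hr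
      exact mem_iUnion.2 ⟨k, Metric.mem_ball.2 hy⟩
    obtain ⟨s, hs⟩ := hKc.elim_finite_subcover (fun k => Metric.ball (D k) r)
      (fun k => Metric.isOpen_ball) hcover
    refine ⟨s.sup id, iSup_le fun n => ENNReal.ofReal_le_ofReal ?_⟩
    have hmem : w n t ∈ closure (range fun n => w n t) :=
      subset_closure (mem_range_self n)
    obtain ⟨k, hk, hkball⟩ := mem_iUnion₂.1 (hs hmem)
    have hDk : D k ∈ F (s.sup id) :=
      mem_image_of_mem D (Finset.le_sup (f := id) hk)
    calc Metric.infDist (g n t) (F (s.sup id)) ≤ dist (g n t) (D k) :=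
          Metric.infDist_le_dist_of_mem hDk
      _ ≤ r := by rw [← hgt n]; exact le_of_lt (Metric.mem_ball.1 hkball)
  -- the intersections are null
  have hnull : ∀ j, (μI T) (⋂ m, S j m) = 0 := by
    intro j
    refine measure_mono_null (fun t ht => ?_) (ae_iff.1 hkey)
    intro hclaim
    obtain ⟨m, hm⟩ := hclaim j
    exact absurd (mem_iInter.1 ht m) (not_lt.2 hm)
  -- uniform integrability parameter
  obtain ⟨δ, hδpos, hδ⟩ := hui.2.1 (half_pos hε)
  -- choose good indices
  have hchoice : ∀ j : ℕ, ∃ M, (μI T) (S j M) < ENNReal.ofReal δ * (2:ℝ≥0∞)⁻¹ ^ (j+1) := by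
    intro j
    have htend : Tendsto (fun m => (μI T) (S j m)) atTop (𝓝 ((μI T) (⋂ m, S j m))) :=
      tendsto_measure_iInter_atTop (fun i => (hSmeas j i).nullMeasurableSet) (hSanti j)
        ⟨0, measure_ne_top (μI T) _⟩
    rw [hnull j] at htend
    have hpos : (0:ℝ≥0∞) < ENNReal.ofReal δ * (2:ℝ≥0∞)⁻¹ ^ (j+1) := by
      apply ENNReal.mul_pos
      · simpa using hδpos
      · simp [pow_ne_zero]
    exact (htend.eventually_lt_const hpos).exists
  choose m hm using hchoice
  -- the small exceptional set
  set A : Set ℝ := ⋃ j, S j (m j) with hAdef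
  have hAmeas : MeasurableSet A := MeasurableSet.iUnion fun j => hSmeas j (m j)
  have hAsmall : (μI T) A ≤ ENNReal.ofReal δ := by
    calc (μI T) A ≤ ∑' j, (μI T) (S j (m j)) := measure_iUnion_le _
      _ ≤ ∑' j : ℕ, ENNReal.ofReal δ * (2:ℝ≥0∞)⁻¹ ^ (j+1) :=
          ENNReal.tsum_le_tsum fun j => (hm j).le
      _ = ENNReal.ofReal δ * ∑' j : ℕ, (2:ℝ≥0∞)⁻¹ ^ (j+1) := ENNReal.tsum_mul_left
      _ = ENNReal.ofReal δ := by
          have : ∑' j : ℕ, (2:ℝ≥0∞)⁻¹ ^ (j+1) = (2:ℝ≥0∞)⁻¹ * ∑' j : ℕ, (2:ℝ≥0∞)⁻¹ ^ j := by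
            rw [← ENNReal.tsum_mul_left]
            exact tsum_congr fun j => by ring
          rw [this, ENNReal.tsum_geometric, ENNReal.one_sub_inv_two, inv_inv]
          rw [ENNReal.inv_mul_cancel two_ne_zero ENNReal.ofNat_ne_top, mul_one]
  -- the compact set
  set C : Set E := insert (0:E) {x | ∀ j, Metric.infDist x (F (m j)) ≤ (2:ℝ)⁻¹ ^ j} with hCdef
  have hCcompact : IsCompact C := by
    apply TotallyBounded.isCompact_of_isClosed
    · rw [Metric.totallyBounded_iff]
      intro ε' hε'
      obtain ⟨j, hj⟩ := exists_pow_lt_of_lt_one hε' (by norm_num : (2:ℝ)⁻¹ < 1)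
      refine ⟨insert (0:E) (F (m j)), (hFfin (m j)).insert 0, ?_⟩
      rintro x (rfl | hx)
      · exact mem_biUnion (mem_insert _ _) (Metric.mem_ball_self hε')
      · have hlt : Metric.infDist x (F (m j)) < ε' := lt_of_le_of_lt (hx j) hj
        obtain ⟨y, hy, hxy⟩ := (Metric.infDist_lt_iff (hFne (m j))).1 hlt
        exact mem_biUnion (mem_insert_of_mem _ hy) (Metric.mem_ball.2 hxy)
    · rw [hCdef, Set.insert_eq]
      apply IsClosed.union isClosed_singleton
      have : {x : E | ∀ j, Metric.infDist x (F (m j)) ≤ (2:ℝ)⁻¹ ^ j}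
          = ⋂ j, {x : E | Metric.infDist x (F (m j)) ≤ (2:ℝ)⁻¹ ^ j} := by
        ext x; simp [mem_iInter]
      rw [this]
      exact isClosed_iInter fun j =>
        isClosed_le (Metric.continuous_infDist_pt _) continuous_const
  -- the approximating functions
  have hvmem : ∀ n, MemLp ((Aᶜ).indicator ((w n : Lp E q (μI T)) : ℝ → E)) q (μI T) :=
    fun n => (Lp.memLp (w n)).indicator hAmeas.compl
  set v : ℕ → Lp E q (μI T) := fun n => (hvmem n).toLp _ with hvdef
  refine ⟨C, hCcompact, v, fun n => ⟨?_, ?_⟩⟩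
  · -- a.e. membership in C
    filter_upwards [(hvmem n).coeFn_toLp, ae_all_iff.2 hgw] with t hvt hgt
    rw [hvt]
    by_cases htA : t ∈ A
    · rw [Set.indicator_of_notMem (by simpa using htA)]
      exact mem_insert _ _
    · rw [Set.indicator_of_mem (by simpa using htA)]
      apply mem_insert_of_mem
      intro j
      have ht' : ¬ ENNReal.ofReal ((2:ℝ)⁻¹ ^ j) < h (m j) t := by
        intro hcon
        exact htA (mem_iUnion.2 ⟨j, hcon⟩)
      have hle : h (m j) t ≤ ENNReal.ofReal ((2:ℝ)⁻¹ ^ j) := not_lt.1 ht'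
      have hle2 : ENNReal.ofReal (Metric.infDist ((w n : Lp E q (μI T)) t) (F (m j)))
          ≤ ENNReal.ofReal ((2:ℝ)⁻¹ ^ j) := by
        rw [hgt n]
        exact le_trans (le_iSup (fun k => ENNReal.ofReal (Metric.infDist (g k t) (F (m j)))) n) hle
      have := (ENNReal.ofReal_le_ofReal_iff (by positivity)).1 hle2
      exact this
  · -- the norm bound
    have heq : ((w n - v n : Lp E q (μI T)) : ℝ → E) =ᵐ[μI T] A.indicator ((w n : Lp E q (μI T)) : ℝ → E) := by
      filter_upwards [Lp.coeFn_sub (w n) (v n), (hvmem n).coeFn_toLp] with t h1 h2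
      rw [h1, Pi.sub_apply, h2]
      by_cases htA : t ∈ A
      · rw [Set.indicator_of_mem htA, Set.indicator_of_notMem (by simpa using htA), sub_zero]
      · rw [Set.indicator_of_notMem htA, Set.indicator_of_mem (by simpa using htA), sub_self]
    rw [Lp.norm_def, eLpNorm_congr_ae heq]
    have hbound := hδ n A hAmeas hAsmall
    have := ENNReal.toReal_le_of_le_ofReal (le_of_lt (half_pos hε)) hbound
    linarith
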